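/- Let S be a nonabelian finite simple group and Q a finite group, and let W = (Q → S) ⋊ Q be the regular wreath product S ≀ Q, with base subgroup B = {(f, 1) : f ∈ Q → S}. If x = (f, q) ∈ W with q ≠ 1 (equivalently, x ∉ B), then [B, x] = B, where [B,x] is the subgroup generated by {b⁻¹x⁻¹bx : b ∈ B}. -/

import Mathlib

/-- The action of `Q` on the base group `Q → S` of the regular wreath product `S ≀ Q`,
permuting coordinates by left translation: `(q • f) x = f (q⁻¹ * x)`. -/
def wreathAction (S Q : Type*) [Group S] [Group Q] : Q →* MulAut (Q → S) where
  toFun q :=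
    { toFun := fun f x => f (q⁻¹ * x)
      invFun := fun f x => f (q * x)
      left_inv := fun f => by funext x; simp [← mul_assoc]
      right_inv := fun f => by funext x; simp [← mul_assoc]
      map_mul' := fun f g => rfl }
  map_one' := by ext f x; simp
  map_mul' := fun q r => by ext f x; simp [mul_assoc, mul_inv_rev]

open SemidirectProduct
open commutatorElement

-- commutator generation in a nonabelian simple group
lemma aux_closure_comm (S : Type*) [Group S] [IsSimpleGroup S]
    (hna : ∃ x y : S, x * y ≠ y * x) :
    Subgroup.closure {w : S | ∃ s u : S, w = s * u⁻¹ * s⁻¹ * u} = ⊤ := by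
  have h1 : {w : S | ∃ s u : S, w = s * u⁻¹ * s⁻¹ * u} = commutatorSet S := by
    ext w
    constructor
    · rintro ⟨s, u, rfl⟩; exact ⟨s, u⁻¹, by group⟩
    · rintro ⟨s, u, rfl⟩; exact ⟨s, u⁻¹, by group⟩
  rw [h1, ← commutator_eq_closure]
  rcases (Subgroup.commutator_normal (⊤ : Subgroup S) ⊤ : (commutator S).Normal).eq_bot_or_eq_top with h | h
  · exfalso
    obtain ⟨a, b, hab⟩ := hna
    have : ⁅a, b⁆ ∈ commutator S := Subgroup.commutator_mem_commutator (Subgroup.mem_top a) (Subgroup.mem_top b)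
    rw [commutator_def, h, Subgroup.mem_bot, commutatorElement_def] at this
    apply hab
    have := congrArg (· * b * a) this
    simpa [mul_assoc] using this
  · exact h

/-- Let `S` be a nonabelian finite simple group, `Q` a finite group, and
`W = (Q → S) ⋊ Q` the regular wreath product `S ≀ Q` with base subgroup `B`.
If `x = (f, q) ∈ W` with `q ≠ 1`, then `[B, x] = B`, where `[B, x]` is the subgroup
generated by all commutators `b⁻¹x⁻¹bx` with `b ∈ B`. -/
theorem stmt_3 (S Q : Type*) [Group S] [Finite S] [IsSimpleGroup S]
    (hna : ∃ x y : S, x * y ≠ y * x) [Group Q] [Finite Q]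
    (f : Q → S) (q : Q) (hq : q ≠ 1) :
    Subgroup.closure {c : (Q → S) ⋊[wreathAction S Q] Q |
        ∃ b : Q → S, c = (SemidirectProduct.inl b)⁻¹ *
          (⟨f, q⟩ : (Q → S) ⋊[wreathAction S Q] Q)⁻¹ *
          SemidirectProduct.inl b * (⟨f, q⟩ : (Q → S) ⋊[wreathAction S Q] Q)} =
      SemidirectProduct.inl.range := by
  classical
  set x : (Q → S) ⋊[wreathAction S Q] Q := ⟨f, q⟩ with hxdef
  set C : Set ((Q → S) ⋊[wreathAction S Q] Q) :=
    {c | ∃ b : Q → S, c = (inl b)⁻¹ * x⁻¹ * inl b * x} with hC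
  set N := Subgroup.closure C with hN
  -- the base-component function of the commutator
  set g : (Q → S) → (Q → S) :=
    fun b y => (b y)⁻¹ * ((f (q * y))⁻¹ * (b (q * y) * f (q * y))) with hg
  have key : ∀ b : Q → S, (inl b)⁻¹ * x⁻¹ * inl b * x = inl (g b) := by
    intro b
    have hleft : ((inl b)⁻¹ * x⁻¹ * inl b * x).left = g b := by
      funext y
      simp only [SemidirectProduct.mul_left, SemidirectProduct.inv_left, left_inl, right_inl, SemidirectProduct.inv_right, SemidirectProduct.mul_right, hxdef]
      simp [wreathAction, g, Pi.mul_apply, Pi.inv_apply, mul_assoc, -mk_eq_inl_mul_inr]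
    have hright : ((inl b)⁻¹ * x⁻¹ * inl b * x).right = 1 := by
      simp [mul_right, inv_right, right_inl, hxdef]
    cases h : (inl b)⁻¹ * x⁻¹ * inl b * x
    have := hleft; have := hright
    rw [h] at hleft hright
    simp only [SemidirectProduct.left, SemidirectProduct.right] at hleft hright  -- may fail
    subst hleft; subst hright; rfl
  have mem_cb : ∀ b : Q → S, inl (g b) ∈ N := fun b =>
    (key b) ▸ Subgroup.subset_closure ⟨b, rfl⟩
  have conj_mem : ∀ b c : Q → S, (inl c)⁻¹ * inl (g b) * inl c ∈ N := by
    intro b c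
    have h1 : (inl c)⁻¹ * ((inl b)⁻¹ * x⁻¹ * inl b * x) * inl c
        = ((inl (b * c))⁻¹ * x⁻¹ * inl (b * c) * x) *
          ((inl c)⁻¹ * x⁻¹ * inl c * x)⁻¹ := by
      rw [map_mul]; group
    rw [← key b, h1, key (b * c), key c]
    exact mul_mem (mem_cb _) (inv_mem (mem_cb _))
  have comm_mem : ∀ b c : Q → S, inl ((g b)⁻¹ * c⁻¹ * g b * c) ∈ N := by
    intro b c
    have h2 : (inl ((g b)⁻¹ * c⁻¹ * g b * c) : (Q → S) ⋊[wreathAction S Q] Q)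
        = (inl (g b))⁻¹ * ((inl c)⁻¹ * inl (g b) * inl c) := by
      simp [map_mul, mul_assoc]
    rw [h2]
    exact mul_mem (inv_mem (mem_cb b)) (conj_mem b c)
  have hqi : ∀ i : Q, q * i ≠ i := by
    intro i h
    exact hq (by rwa [mul_eq_right] at h)
  have hgb : ∀ (i : Q) (s : S), g (Pi.mulSingle i s) i = s⁻¹ := by
    intro i s
    simp [hg, Pi.mulSingle_apply, hq]
  have single_comm : ∀ (i : Q) (s u : S),
      inl (Pi.mulSingle i (s * u⁻¹ * s⁻¹ * u)) ∈ N := by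
    intro i s u
    have h := comm_mem (Pi.mulSingle i s) (Pi.mulSingle i u)
    have heq : (g (Pi.mulSingle i s))⁻¹ * (Pi.mulSingle i u)⁻¹ *
          g (Pi.mulSingle i s) * Pi.mulSingle i u
        = Pi.mulSingle i (s * u⁻¹ * s⁻¹ * u) := by
      funext y
      by_cases hy : y = i
      · subst hy
        simp [Pi.mul_apply, Pi.inv_apply, Pi.mulSingle_apply, hgb y]
      · simp [Pi.mul_apply, Pi.inv_apply, Pi.mulSingle_apply, hy]
    rw [heq] at h
    exact h
  have single_mem : ∀ (i : Q) (v : S), inl (Pi.mulSingle i v) ∈ N := by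
    intro i v
    have hS := aux_closure_comm S hna
    have hle : Subgroup.closure {w : S | ∃ s u : S, w = s * u⁻¹ * s⁻¹ * u}
        ≤ N.comap ((inl : (Q → S) →* ((Q → S) ⋊[wreathAction S Q] Q)).comp
            (MonoidHom.mulSingle (fun _ : Q => S) i)) := by
      rw [Subgroup.closure_le]
      rintro w ⟨s, u, rfl⟩
      exact single_comm i s u
    rw [hS] at hle
    exact hle (Subgroup.mem_top v)
  apply le_antisymm
  · rw [hN, Subgroup.closure_le]
    rintro c ⟨b, rfl⟩
    exact (key b) ▸ ⟨g b, rfl⟩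
  · rintro w ⟨gg, rfl⟩
    exact Subgroup.mem_comap.mp
      (Subgroup.pi_mem_of_mulSingle_mem (H := N.comap inl) gg
        (fun i => Subgroup.mem_comap.mpr (single_mem i (gg i))))
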